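/- Let λ ∈ [0, 1], let n > 2 be an integer, and define R_n : (0, ∞) → ℝ by R_n(x) = (|(1−λ)x + λ|ⁿ − |(1−λ)x − λ|ⁿ)·(|(1−λ) + λx|ⁿ − |(1−λ) − λx|ⁿ)/xⁿ. Then for every x ∈ (0, ∞) with x ≠ 1, one has R_n(x) > R_n(1), provided λ ∈ (0,1); and in all cases R_n(x) ≥ R_n(1) for all x ∈ (0, ∞). -/

import Mathlib

open Finset

noncomputable def Gaux (n : ℕ) (U : ℝ) : ℝ := ((U^2+1)^n - (U^2-1)^n) / U^n

noncomputable def caux (n k : ℕ) : ℝ := (n.choose k : ℝ) * (1 - (-1:ℝ)^(n-k))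

lemma core_expand (n : ℕ) (Y : ℝ) :
    (Y+1)^n - (Y-1)^n
      = ∑ k ∈ Finset.range (n+1), caux n k * Y^k := by
  have h1 : (Y+1)^n = ∑ k ∈ Finset.range (n+1), Y^k * 1^(n-k) * (n.choose k : ℝ) :=
    add_pow Y 1 n
  have h2 : (Y-1)^n = ∑ k ∈ Finset.range (n+1), Y^k * (-1:ℝ)^(n-k) * (n.choose k : ℝ) := by
    rw [sub_eq_add_neg, add_pow]
  rw [h1, h2, ← Finset.sum_sub_distrib]
  apply Finset.sum_congr rfl
  intro k _
  unfold caux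
  ring

lemma lagrange (R : Finset ℕ) (c : ℕ → ℝ) (A B : ℝ) :
    (∑ j ∈ R, c j * (A^2)^j) * (∑ k ∈ R, c k * (B^2)^k)
      - (∑ j ∈ R, c j * (A*B)^j) * (∑ k ∈ R, c k * (A*B)^k)
    = (1/2) * ∑ j ∈ R, ∑ k ∈ R, (c j * c k) * (A^j*B^k - A^k*B^j)^2 := by
  rw [Finset.sum_mul_sum, Finset.sum_mul_sum, ← Finset.sum_sub_distrib]
  simp_rw [← Finset.sum_sub_distrib]
  have swap : (∑ j ∈ R, ∑ k ∈ R, (c j * (A^2)^j * (c k * (B^2)^k)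
        - c j * (A*B)^j * (c k * (A*B)^k)))
      = ∑ j ∈ R, ∑ k ∈ R, (c k * (A^2)^k * (c j * (B^2)^j)
        - c k * (A*B)^k * (c j * (A*B)^j)) := Finset.sum_comm
  have twice : (∑ j ∈ R, ∑ k ∈ R, (c j * (A^2)^j * (c k * (B^2)^k)
        - c j * (A*B)^j * (c k * (A*B)^k))) * 2
      = ∑ j ∈ R, ∑ k ∈ R, (c j * c k) * (A^j*B^k - A^k*B^j)^2 := by
    rw [mul_two]
    nth_rewrite 2 [swap]
    rw [← Finset.sum_add_distrib]
    simp_rw [← Finset.sum_add_distrib]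
    apply Finset.sum_congr rfl
    intro j _
    apply Finset.sum_congr rfl
    intro k _
    ring
  linarith [twice]

lemma caux_nonneg (n k : ℕ) : 0 ≤ caux n k := by
  unfold caux
  apply mul_nonneg (Nat.cast_nonneg _)
  rcases neg_one_pow_eq_or ℝ (n-k) with h | h <;> rw [h] <;> norm_num

lemma core_cs_diff (n : ℕ) (A B : ℝ) :
    ((A^2+1)^n - (A^2-1)^n) * ((B^2+1)^n - (B^2-1)^n)
      - ((A*B+1)^n - (A*B-1)^n)^2
    = (1/2) * ∑ j ∈ Finset.range (n+1), ∑ k ∈ Finset.range (n+1),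
        (caux n j * caux n k) * (A^j*B^k - A^k*B^j)^2 := by
  have hsq : ((A*B+1)^n - (A*B-1)^n)^2
      = ((A*B+1)^n - (A*B-1)^n) * ((A*B+1)^n - (A*B-1)^n) := sq ((A*B+1)^n - (A*B-1)^n)
  rw [hsq, core_expand n (A^2), core_expand n (B^2), core_expand n (A*B)]
  exact lagrange _ (caux n) A B

lemma core_cs (n : ℕ) (A B : ℝ) :
    ((A*B+1)^n - (A*B-1)^n)^2
      ≤ ((A^2+1)^n - (A^2-1)^n) * ((B^2+1)^n - (B^2-1)^n) := by
  have h := core_cs_diff n A B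
  have hnn : 0 ≤ (1/2 : ℝ) * ∑ j ∈ Finset.range (n+1), ∑ k ∈ Finset.range (n+1),
      (caux n j * caux n k) * (A^j*B^k - A^k*B^j)^2 := by
    apply mul_nonneg (by norm_num)
    apply Finset.sum_nonneg; intro j _
    apply Finset.sum_nonneg; intro k _
    exact mul_nonneg (mul_nonneg (caux_nonneg n j) (caux_nonneg n k)) (sq_nonneg _)
  linarith

lemma core_cs_strict (n : ℕ) (hn : 2 < n) (A B : ℝ) (hA : 1 ≤ A) (hB : 1 ≤ B)
    (hAB : A ≠ B) :
    ((A*B+1)^n - (A*B-1)^n)^2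
      < ((A^2+1)^n - (A^2-1)^n) * ((B^2+1)^n - (B^2-1)^n) := by
  obtain ⟨m, rfl⟩ : ∃ m, n = m + 3 := ⟨n - 3, by omega⟩
  have h := core_cs_diff (m+3) A B
  have hA0 : (0:ℝ) < A := lt_of_lt_of_le one_pos hA
  have hB0 : (0:ℝ) < B := lt_of_lt_of_le one_pos hB
  -- the special term at j = m+2, k = m
  have hterm : 0 < (caux (m+3) (m+2) * caux (m+3) m) * (A^(m+2)*B^m - A^m*B^(m+2))^2 := by
    have hc1 : 0 < caux (m+3) (m+2) := by
      unfold caux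
      rw [show m+3-(m+2) = 1 by omega]
      have : (0:ℝ) < ((m+3).choose (m+2) : ℝ) := by
        have := Nat.choose_pos (show m+2 ≤ m+3 by omega)
        exact_mod_cast this
      nlinarith
    have hc2 : 0 < caux (m+3) m := by
      unfold caux
      rw [show m+3-m = 3 by omega]
      have : (0:ℝ) < ((m+3).choose m : ℝ) := by
        have := Nat.choose_pos (show m ≤ m+3 by omega)
        exact_mod_cast this
      nlinarith
    have hne : A^(m+2)*B^m - A^m*B^(m+2) ≠ 0 := by
      have hAB2 : A^2 ≠ B^2 := by
        intro h2
        exact hAB (by nlinarith [sq_nonneg (A - B), sq_nonneg (A + B)])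
      have : A^(m+2)*B^m - A^m*B^(m+2) = A^m*B^m*(A^2 - B^2) := by ring
      rw [this]
      exact mul_ne_zero (mul_ne_zero (pow_ne_zero _ hA0.ne') (pow_ne_zero _ hB0.ne'))
        (sub_ne_zero.2 hAB2)
    positivity
  have hsum : (caux (m+3) (m+2) * caux (m+3) m) * (A^(m+2)*B^m - A^m*B^(m+2))^2
      ≤ ∑ j ∈ Finset.range (m+4), ∑ k ∈ Finset.range (m+4),
        (caux (m+3) j * caux (m+3) k) * (A^j*B^k - A^k*B^j)^2 := by
    have hinner : ∀ j ∈ Finset.range (m+4), (0:ℝ) ≤ ∑ k ∈ Finset.range (m+4),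
        (caux (m+3) j * caux (m+3) k) * (A^j*B^k - A^k*B^j)^2 := by
      intro j _
      apply Finset.sum_nonneg; intro k _
      exact mul_nonneg (mul_nonneg (caux_nonneg _ _) (caux_nonneg _ _)) (sq_nonneg _)
    calc (caux (m+3) (m+2) * caux (m+3) m) * (A^(m+2)*B^m - A^m*B^(m+2))^2
        ≤ ∑ k ∈ Finset.range (m+4),
            (caux (m+3) (m+2) * caux (m+3) k) * (A^(m+2)*B^k - A^k*B^(m+2))^2 := by
          apply Finset.single_le_sum (f := fun k => (caux (m+3) (m+2) * caux (m+3) k)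
            * (A^(m+2)*B^k - A^k*B^(m+2))^2)
          · intro k _
            exact mul_nonneg (mul_nonneg (caux_nonneg _ _) (caux_nonneg _ _)) (sq_nonneg _)
          · simp only [Finset.mem_range]; omega
      _ ≤ _ := by
          apply Finset.single_le_sum (f := fun j => ∑ k ∈ Finset.range (m+4),
            (caux (m+3) j * caux (m+3) k) * (A^j*B^k - A^k*B^j)^2) hinner
          simp only [Finset.mem_range]; omega
  linarith

lemma Gaux_pos (n : ℕ) (hn : 0 < n) (U : ℝ) (hU : 1 ≤ U) : 0 < Gaux n U := by
  have hU0 : (0:ℝ) < U := lt_of_lt_of_le one_pos hU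
  unfold Gaux
  apply div_pos _ (pow_pos hU0 n)
  have h1 : (0:ℝ) ≤ U^2 - 1 := by nlinarith
  have h2 : U^2 - 1 < U^2 + 1 := by linarith
  have := pow_lt_pow_left₀ h2 h1 hn.ne'
  linarith

lemma sqrt_sq_pow (v : ℝ) (hv : 0 ≤ v) (n : ℕ) :
    (Real.sqrt v)^n * (Real.sqrt v)^n = v^n := by
  rw [← mul_pow, Real.mul_self_sqrt hv]

lemma Gaux_cs (n : ℕ) (A B : ℝ) (hA : 1 ≤ A) (hB : 1 ≤ B) :
    (Gaux n (Real.sqrt (A*B)))^2 ≤ Gaux n A * Gaux n B := by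
  have hA0 : (0:ℝ) < A := lt_of_lt_of_le one_pos hA
  have hB0 : (0:ℝ) < B := lt_of_lt_of_le one_pos hB
  have hab : (0:ℝ) < A*B := mul_pos hA0 hB0
  have hs : (Real.sqrt (A*B))^2 = A*B := Real.sq_sqrt hab.le
  unfold Gaux
  rw [div_mul_div_comm, div_pow, ← mul_pow, hs, pow_right_comm, hs]
  exact div_le_div_of_nonneg_right (core_cs n A B) (pow_pos hab n).le

lemma Gaux_cs_strict (n : ℕ) (hn : 2 < n) (A B : ℝ) (hA : 1 ≤ A) (hB : 1 ≤ B)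
    (hAB : A ≠ B) :
    (Gaux n (Real.sqrt (A*B)))^2 < Gaux n A * Gaux n B := by
  have hA0 : (0:ℝ) < A := lt_of_lt_of_le one_pos hA
  have hB0 : (0:ℝ) < B := lt_of_lt_of_le one_pos hB
  have hab : (0:ℝ) < A*B := mul_pos hA0 hB0
  have hs : (Real.sqrt (A*B))^2 = A*B := Real.sq_sqrt hab.le
  unfold Gaux
  rw [div_mul_div_comm, div_pow, ← mul_pow, hs, pow_right_comm, hs]
  exact div_lt_div_of_pos_right (core_cs_strict n hn A B hA hB hAB) (pow_pos hab n)


lemma K_eq (n : ℕ) (M m : ℝ) (hm : 0 < m) (hMm : m ≤ M) :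
    (M+m)^n - (M-m)^n = (Real.sqrt (M*m))^n * Gaux n (Real.sqrt (M/m)) := by
  have hM : 0 < M := lt_of_lt_of_le hm hMm
  have hsM : (0:ℝ) < Real.sqrt M := Real.sqrt_pos.2 hM
  have hsm : (0:ℝ) < Real.sqrt m := Real.sqrt_pos.2 hm
  rw [Real.sqrt_mul hM.le, Real.sqrt_div hM.le]
  have hsM2 : (Real.sqrt M)^2 = M := Real.sq_sqrt hM.le
  have hsm2 : (Real.sqrt m)^2 = m := Real.sq_sqrt hm.le
  unfold Gaux
  rw [div_pow, div_pow, hsM2, hsm2]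
  have hmn : (Real.sqrt m)^n ≠ 0 := pow_ne_zero _ hsm.ne'
  have hMn : (Real.sqrt M)^n ≠ 0 := pow_ne_zero _ hsM.ne'
  have e1 : M/m + 1 = (M+m)/m := by field_simp
  have e2 : M/m - 1 = (M-m)/m := by field_simp
  rw [e1, e2, div_pow, div_pow, ← hsm2, ← hsM2]
  have hm2n : ((Real.sqrt m)^2)^n ≠ 0 := pow_ne_zero _ (pow_ne_zero _ hsm.ne')
  field_simp
  rw [Real.sqrt_sq hsM.le, Real.sqrt_sq hsm.le]
  rw [mul_pow]
  have h2n : (Real.sqrt m)^(n*2) = m^n := by rw [pow_mul', hsm2]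
  ring

lemma Gaux_mono (n : ℕ) (hn : 2 < n) : StrictMonoOn (Gaux n) (Set.Ici 1) := by
  obtain ⟨m, rfl⟩ : ∃ m, n = m + 3 := ⟨n - 3, by omega⟩
  apply strictMonoOn_of_deriv_pos (convex_Ici 1)
  · apply ContinuousOn.div
    · fun_prop
    · fun_prop
    · intro x hx
      have hx0 : (0:ℝ) < x := lt_of_lt_of_le one_pos hx
      exact pow_ne_zero _ hx0.ne'
  · rw [interior_Ici]
    intro x hx
    have hx1 : (1:ℝ) < x := hx
    have hx0 : (0:ℝ) < x := lt_trans one_pos hx1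
    have hp : HasDerivAt (fun y : ℝ => y^2+1) (2*x) x := by
      simpa using (hasDerivAt_pow 2 x).add_const 1
    have hq : HasDerivAt (fun y : ℝ => y^2-1) (2*x) x := by
      simpa using (hasDerivAt_pow 2 x).sub_const 1
    have hnum := (hp.pow (m+3)).sub (hq.pow (m+3))
    have hden := hasDerivAt_pow (m+3) x
    have hdiv := hnum.div hden (pow_ne_zero _ hx0.ne')
    have hG : HasDerivAt (Gaux (m+3))
        (((((m+3:ℕ):ℝ) * (x^2+1)^(m+3-1) * (2*x) - ((m+3:ℕ):ℝ) * (x^2-1)^(m+3-1) * (2*x))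
            * x^(m+3)
          - ((x^2+1)^(m+3) - (x^2-1)^(m+3)) * (((m+3:ℕ):ℝ) * x^(m+3-1)))
          / (x^(m+3))^2) x := hdiv
    rw [hG.deriv]
    apply div_pos _ (pow_pos (pow_pos hx0 _) 2)
    have hkey : (((m+3:ℕ):ℝ) * (x^2+1)^(m+3-1) * (2*x) - ((m+3:ℕ):ℝ) * (x^2-1)^(m+3-1) * (2*x))
            * x^(m+3)
          - ((x^2+1)^(m+3) - (x^2-1)^(m+3)) * (((m+3:ℕ):ℝ) * x^(m+3-1))
        = ((m+3:ℕ):ℝ) * x^(m+2) * ((x^2+1) * (x^2-1) * ((x^2+1)^(m+1) - (x^2-1)^(m+1))) := by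
      simp only [show m+3-1 = m+2 from rfl]
      push_cast
      ring
    rw [hkey]
    have hq0 : (0:ℝ) < x^2 - 1 := by nlinarith
    have hpq : x^2 - 1 < x^2 + 1 := by linarith
    have hpow : (x^2-1)^(m+1) < (x^2+1)^(m+1) :=
      pow_lt_pow_left₀ hpq hq0.le (by omega)
    have : (0:ℝ) < ((m+3:ℕ):ℝ) := by positivity
    apply mul_pos (mul_pos this (pow_pos hx0 _))
    apply mul_pos (mul_pos (by nlinarith) hq0)
    linarith

lemma one_le_sqrt' {v : ℝ} (h : 1 ≤ v) : 1 ≤ Real.sqrt v := by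
  rw [show (1:ℝ) = Real.sqrt 1 by simp]
  exact Real.sqrt_le_sqrt (by simpa using h)

lemma core_ineq (n : ℕ) (hn : 2 < n) (a b x : ℝ) (hb : 0 < b) (hba : b ≤ a) (hx : 1 < x) :
    ((a+b)^n - (a-b)^n)^2 < ((a*x+b)^n - (a*x-b)^n) * ((a+b*x)^n - |a-b*x|^n) / x^n := by
  have ha : 0 < a := lt_of_lt_of_le hb hba
  have hx0 : (0:ℝ) < x := lt_trans one_pos hx
  have hxn : (x:ℝ)^n ≠ 0 := pow_ne_zero _ hx0.ne'
  have hax : b ≤ a*x := by nlinarith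
  have habx : (0:ℝ) ≤ a*x*b := by positivity
  have e0 : (a+b)^n - (a-b)^n = (Real.sqrt (a*b))^n * Gaux n (Real.sqrt (a/b)) :=
    K_eq n a b hb hba
  have e1 : (a*x+b)^n - (a*x-b)^n = (Real.sqrt (a*x*b))^n * Gaux n (Real.sqrt (a*x/b)) :=
    K_eq n (a*x) b hb hax
  have hA : 1 ≤ Real.sqrt (a*x/b) := one_le_sqrt' ((one_le_div hb).2 hax)
  have hU0 : 1 ≤ Real.sqrt (a/b) := one_le_sqrt' ((one_le_div hb).2 hba)
  have hL : ((Real.sqrt (a*b))^n * Gaux n (Real.sqrt (a/b)))^2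
      = (a*b)^n * (Gaux n (Real.sqrt (a/b)))^2 := by
    rw [mul_pow, pow_right_comm, Real.sq_sqrt (by positivity)]
  have hRaux : ∀ GA GB : ℝ, ((Real.sqrt (a*x*b))^n * GA) * ((Real.sqrt (a*x*b))^n * GB) / x^n
      = (a*b)^n * (GA*GB) := by
    intro GA GB
    have h1 : (Real.sqrt (a*x*b))^n * (Real.sqrt (a*x*b))^n = (a*b)^n * x^n := by
      rw [sqrt_sq_pow _ habx, show a*x*b = a*b*x by ring, mul_pow]
    calc ((Real.sqrt (a*x*b))^n * GA) * ((Real.sqrt (a*x*b))^n * GB) / x^n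
        = ((Real.sqrt (a*x*b))^n * (Real.sqrt (a*x*b))^n) * (GA*GB) / x^n := by ring
      _ = ((a*b)^n * x^n) * (GA*GB) / x^n := by rw [h1]
      _ = (a*b)^n * (GA*GB) := by field_simp
  have habn : (0:ℝ) < (a*b)^n := pow_pos (mul_pos ha hb) n
  rcases le_or_gt (b*x) a with hc | hc
  · -- b*x ≤ a
    rw [abs_of_nonneg (by linarith : (0:ℝ) ≤ a - b*x)]
    have e2 : (a+b*x)^n - (a-b*x)^n
        = (Real.sqrt (a*(b*x)))^n * Gaux n (Real.sqrt (a/(b*x))) :=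
      K_eq n a (b*x) (mul_pos hb hx0) hc
    rw [show a*(b*x) = a*x*b by ring] at e2
    have hB : 1 ≤ Real.sqrt (a/(b*x)) := one_le_sqrt' ((one_le_div (mul_pos hb hx0)).2 hc)
    have hlt : Real.sqrt (a/(b*x)) < Real.sqrt (a*x/b) := by
      apply Real.sqrt_lt_sqrt (by positivity)
      rw [div_lt_div_iff₀ (by positivity) hb]
      nlinarith [mul_pos ha hb, (show (1:ℝ) < x*x by nlinarith)]
    have hstrict := Gaux_cs_strict n hn _ _ hA hB hlt.ne'
    have hABeq : Real.sqrt (a*x/b) * Real.sqrt (a/(b*x)) = a/b := by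
      rw [← Real.sqrt_mul (by positivity), show (a*x/b) * (a/(b*x)) = (a/b)^2 by
        field_simp, Real.sqrt_sq (by positivity)]
    rw [hABeq] at hstrict
    rw [e0, e1, e2, hL, hRaux]
    exact mul_lt_mul_of_pos_left hstrict habn
  · -- a < b*x
    rw [abs_of_neg (by linarith : a - b*x < 0), neg_sub]
    have e2 : (b*x+a)^n - (b*x-a)^n
        = (Real.sqrt (b*x*a))^n * Gaux n (Real.sqrt (b*x/a)) :=
      K_eq n (b*x) a ha hc.le
    rw [show b*x*a = a*x*b by ring] at e2
    rw [show a+b*x = b*x+a by ring]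
    have hB : 1 ≤ Real.sqrt (b*x/a) := one_le_sqrt' ((one_le_div ha).2 hc.le)
    have hcs := Gaux_cs n _ _ hA hB
    have hABeq : Real.sqrt (a*x/b) * Real.sqrt (b*x/a) = Real.sqrt (x^2) := by
      rw [← Real.sqrt_mul (by positivity)]
      congr 1
      field_simp
    rw [hABeq, Real.sqrt_sq hx0.le] at hcs
    have hmono : Gaux n (Real.sqrt (a/b)) < Gaux n (Real.sqrt x) := by
      apply Gaux_mono n hn (Set.mem_Ici.2 hU0) (Set.mem_Ici.2 (one_le_sqrt' (by nlinarith)))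
      apply Real.sqrt_lt_sqrt (by positivity)
      rw [div_lt_iff₀ hb]
      linarith
    have hG0 : 0 < Gaux n (Real.sqrt (a/b)) := Gaux_pos n (by omega) _ hU0
    have hsq : (Gaux n (Real.sqrt (a/b)))^2 < (Gaux n (Real.sqrt x))^2 :=
      pow_lt_pow_left₀ hmono hG0.le (by norm_num)
    rw [e0, e1, e2, hL, hRaux]
    exact mul_lt_mul_of_pos_left (lt_of_lt_of_le hsq hcs) habn

/-- The function `R_n` from the paper. -/
noncomputable def Rfun (l : ℝ) (n : ℕ) (x : ℝ) : ℝ :=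
  (|(1 - l) * x + l| ^ n - |(1 - l) * x - l| ^ n) *
    (|(1 - l) + l * x| ^ n - |(1 - l) - l * x| ^ n) / x ^ n

lemma Rfun_swap (l : ℝ) (n : ℕ) (x : ℝ) : Rfun (1-l) n x = Rfun l n x := by
  unfold Rfun
  have e1 : |(1-(1-l))*x + (1-l)| = |(1-l) + l*x| := by
    rw [show (1-(1-l))*x + (1-l) = (1-l) + l*x by ring]
  have e2 : |(1-(1-l))*x - (1-l)| = |(1-l) - l*x| := by
    rw [show (1-(1-l))*x - (1-l) = -((1-l) - l*x) by ring, abs_neg]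
  have e3 : |(1-(1-l)) + (1-l)*x| = |(1-l)*x + l| := by
    rw [show (1-(1-l)) + (1-l)*x = (1-l)*x + l by ring]
  have e4 : |(1-(1-l)) - (1-l)*x| = |(1-l)*x - l| := by
    rw [show (1-(1-l)) - (1-l)*x = -((1-l)*x - l) by ring, abs_neg]
  rw [e1, e2, e3, e4]
  ring

lemma Rfun_inv (l : ℝ) (n : ℕ) (x : ℝ) (hx : 0 < x) : Rfun l n x⁻¹ = Rfun l n x := by
  unfold Rfun
  have hxne : x ≠ 0 := hx.ne'
  have e1 : (1-l)*x⁻¹ + l = ((1-l) + l*x)/x := by field_simp; try ring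
  have e2 : (1-l)*x⁻¹ - l = ((1-l) - l*x)/x := by field_simp; try ring
  have e3 : (1-l) + l*x⁻¹ = ((1-l)*x + l)/x := by field_simp; try ring
  have e4 : (1-l) - l*x⁻¹ = ((1-l)*x - l)/x := by field_simp; try ring
  rw [e1, e2, e3, e4, abs_div, abs_div, abs_div, abs_div, abs_of_pos hx, div_pow, div_pow,
    div_pow, div_pow, inv_pow]
  have hxn : (x:ℝ)^n ≠ 0 := pow_ne_zero _ hxne
  field_simp

lemma main3 (l : ℝ) (h0 : 0 < l) (h2 : l ≤ 1/2) (n : ℕ) (hn : 2 < n) (x : ℝ) (hx : 1 < x) :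
    Rfun l n 1 < Rfun l n x := by
  have hba : l ≤ 1 - l := by linarith
  have ha : 0 < 1 - l := lt_of_lt_of_le h0 hba
  have key := core_ineq n hn (1-l) l x h0 hba hx
  unfold Rfun
  simp only [mul_one, one_pow, div_one]
  rw [abs_of_pos (show (0:ℝ) < (1-l) + l by linarith),
    abs_of_nonneg (show (0:ℝ) ≤ (1-l) - l by linarith),
    abs_of_pos (show (0:ℝ) < (1-l)*x + l by nlinarith),
    abs_of_pos (show (0:ℝ) < (1-l)*x - l by nlinarith),
    abs_of_pos (show (0:ℝ) < (1-l) + l*x by nlinarith)]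
  rw [← sq]
  exact key

theorem R_n_minimum_at_one (l : ℝ) (hl : l ∈ Set.Icc (0 : ℝ) 1) (n : ℕ) (hn : 2 < n) :
    (∀ x : ℝ, 0 < x → Rfun l n x ≥ Rfun l n 1) ∧
    (l ∈ Set.Ioo (0 : ℝ) 1 → ∀ x : ℝ, 0 < x → x ≠ 1 → Rfun l n x > Rfun l n 1) := by
  have main1 : ∀ l' : ℝ, 0 < l' → l' < 1 → ∀ x : ℝ, 1 < x → Rfun l' n 1 < Rfun l' n x := by
    intro l' h0 h1 x hx
    rcases le_or_gt l' (1/2) with hc | hc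
    · exact main3 l' h0 hc n hn x hx
    · rw [← Rfun_swap l' n x, ← Rfun_swap l' n 1]
      exact main3 (1-l') (by linarith) (by linarith) n hn x hx
  have main : ∀ l' : ℝ, 0 < l' → l' < 1 → ∀ x : ℝ, 0 < x → x ≠ 1 → Rfun l' n 1 < Rfun l' n x := by
    intro l' h0 h1 x hx hne
    rcases lt_trichotomy x 1 with hlt | heq | hgt
    · have hinv : 1 < x⁻¹ := (one_lt_inv₀ hx).2 hlt
      have := main1 l' h0 h1 x⁻¹ hinv
      rwa [Rfun_inv l' n x hx] at this
    · exact absurd heq hne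
    · exact main1 l' h0 h1 x hgt
  obtain ⟨hl0, hl1⟩ := hl
  constructor
  · intro x hx
    rcases eq_or_ne x 1 with rfl | hne
    · exact le_refl _
    rcases hl0.eq_or_lt with rfl | hl0'
    · have hz : ∀ y : ℝ, Rfun 0 n y = 0 := by
        intro y; unfold Rfun; simp
      rw [hz, hz]
    rcases hl1.lt_or_eq with hl1' | rfl
    · exact (main l hl0' hl1' x hx hne).le
    · have hz : ∀ y : ℝ, Rfun 1 n y = 0 := by
        intro y; unfold Rfun; simp
      rw [hz, hz]
  · intro hmem x hx hne
    exact main l hmem.1 hmem.2 x hx hne
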